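/- For every d ≥ 2, the mutual-visibility number of the hypercube satisfies μ(Q_d) ≤ 2·μ(Q_{d-1}). -/

import Mathlib

open SimpleGraph

/-- Two vertices are `X`-visible in `G`: some shortest path between them has
no internal vertex in `X`. -/
def IsVisiblePair {V : Type*} (G : SimpleGraph V) (X : Set V) (x y : V) : Prop :=
  ∃ p : G.Walk x y, p.IsPath ∧ p.length = G.dist x y ∧
    ∀ z ∈ p.support, z ∈ X → z = x ∨ z = y

/-- `X` is a mutual-visibility set of `G`. -/
def MutualVisSet {V : Type*} (G : SimpleGraph V) (X : Set V) : Prop :=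
  ∀ x ∈ X, ∀ y ∈ X, IsVisiblePair G X x y

/-- `X` is a total mutual-visibility set of `G`. -/
def TotalMutualVisSet {V : Type*} (G : SimpleGraph V) (X : Set V) : Prop :=
  ∀ x y : V, IsVisiblePair G X x y

/-- The mutual-visibility number `μ(G)`. -/
noncomputable def mutualVisNum {V : Type*} (G : SimpleGraph V) : ℕ :=
  sSup {n | ∃ X : Set V, MutualVisSet G X ∧ X.ncard = n}

/-- The total mutual-visibility number `μₜ(G)`. -/
noncomputable def totalMutualVisNum {V : Type*} (G : SimpleGraph V) : ℕ :=
  sSup {n | ∃ X : Set V, TotalMutualVisSet G X ∧ X.ncard = n}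

/-- A set of vertices is convex: every shortest path in `G` between two of its
vertices has all its vertices in the set. -/
def ConvexSet {V : Type*} (G : SimpleGraph V) (S : Set V) : Prop :=
  ∀ x ∈ S, ∀ y ∈ S, ∀ p : G.Walk x y, p.IsPath → p.length = G.dist x y →
    ∀ z ∈ p.support, z ∈ S

/-- The hypercube `Q_d`: vertices are `{0,1}^d`, adjacency is Hamming distance 1. -/
def Qube (d : ℕ) : SimpleGraph (Fin d → Bool) :=
  SimpleGraph.fromRel (fun x y => hammingDist x y = 1)

lemma qube_adj {d : ℕ} {x y : Fin d → Bool} :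
    (Qube d).Adj x y ↔ x ≠ y ∧ hammingDist x y = 1 := by
  constructor
  · rintro ⟨hne, h | h⟩
    · exact ⟨hne, h⟩
    · exact ⟨hne, (hammingDist_comm x y).trans h⟩
  · rintro ⟨hne, h⟩; exact ⟨hne, Or.inl h⟩

lemma hd_le_length {d : ℕ} : ∀ {x y : Fin d → Bool} (p : (Qube d).Walk x y),
    hammingDist x y ≤ p.length := by
  intro x y p
  induction p with
  | nil => simp
  | @cons u v w h p ih =>
    rw [SimpleGraph.Walk.length_cons]
    have ht := hammingDist_triangle u v w
    have h1 := (qube_adj.mp h).2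
    omega

lemma exists_walk_hd {d : ℕ} : ∀ (k : ℕ) (x y : Fin d → Bool), hammingDist x y = k →
    ∃ p : (Qube d).Walk x y, p.length = k := by
  intro k
  induction k with
  | zero => intro x y h; obtain rfl := hammingDist_eq_zero.mp h; exact ⟨.nil, rfl⟩
  | succ k ih =>
    intro x y h
    have hne : x ≠ y := by
      intro he; subst he; rw [hammingDist_self] at h; omega
    obtain ⟨i, hi⟩ : ∃ i, x i ≠ y i := Function.ne_iff.mp hne
    set x' := Function.update x i (y i) with hx'
    have h1 : hammingDist x x' = 1 := by
      rw [hammingDist, Finset.card_eq_one]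
      refine ⟨i, ?_⟩
      ext j
      simp only [Finset.mem_filter, Finset.mem_univ, true_and, Finset.mem_singleton]
      constructor
      · intro hj; by_contra hji
        simp [hx', Function.update_of_ne hji] at hj
      · rintro rfl; simpa [hx'] using hi
    have h2 : hammingDist x' y = k := by
      have : (Finset.univ.filter (fun j => x' j ≠ y j))
          = (Finset.univ.filter (fun j => x j ≠ y j)).erase i := by
        ext j
        simp only [Finset.mem_filter, Finset.mem_univ, true_and, Finset.mem_erase]
        constructor
        · intro hj
          have hji : j ≠ i := by rintro rfl; simp [hx'] at hj
          exact ⟨hji, by simpa [hx', Function.update_of_ne hji] using hj⟩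
        · rintro ⟨hji, hj⟩; simpa [hx', Function.update_of_ne hji] using hj
      rw [hammingDist, this, Finset.card_erase_of_mem (by simp [hi])]
      rw [hammingDist] at h; omega
    obtain ⟨p, hp⟩ := ih x' y h2
    have hadj : (Qube d).Adj x x' := qube_adj.mpr ⟨by
        intro he; rw [← he, hammingDist_self] at h1; omega, h1⟩
    exact ⟨.cons hadj p, by simp [hp]⟩

lemma qube_dist {d : ℕ} (x y : Fin d → Bool) : (Qube d).dist x y = hammingDist x y := by
  obtain ⟨p, hp⟩ := exists_walk_hd (hammingDist x y) x y rfl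
  refine le_antisymm (hp ▸ SimpleGraph.dist_le p) ?_
  have hr : (Qube d).Reachable x y := ⟨p⟩
  obtain ⟨q, hq⟩ := hr.exists_walk_length_eq_dist
  exact hq ▸ hd_le_length q

section
variable {n : ℕ}

lemma hd_split (x y : Fin (n+1) → Bool) :
    hammingDist x y = hammingDist (Fin.init x) (Fin.init y)
      + (if x (Fin.last n) ≠ y (Fin.last n) then 1 else 0) := by
  simp only [hammingDist, Finset.card_filter]
  simp only [hammingDist, Finset.card_filter, Fin.sum_univ_castSucc, Fin.init]
  rfl

lemma hd_snoc (a b : Fin n → Bool) (c : Bool) :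
    hammingDist (Fin.snoc a c : Fin (n+1) → Bool) (Fin.snoc b c : Fin (n+1) → Bool)
      = hammingDist a b := by
  rw [hd_split ((Fin.snoc a c : Fin (n+1) → Bool)) ((Fin.snoc b c : Fin (n+1) → Bool))]
  simp

lemma hd_detour {a b : Fin n → Bool} {c : Bool} {z : Fin (n+1) → Bool}
    (hz : z (Fin.last n) ≠ c) :
    hammingDist a b + 2 ≤
      hammingDist (Fin.snoc a c : Fin (n+1) → Bool) z
        + hammingDist z (Fin.snoc b c : Fin (n+1) → Bool) := by
  rw [hd_split ((Fin.snoc a c : Fin (n+1) → Bool)) z,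
    hd_split z ((Fin.snoc b c : Fin (n+1) → Bool))]
  simp only [Fin.init_snoc, Fin.snoc_last]
  have h1 := hammingDist_triangle a (Fin.init z) b
  rw [if_pos (fun h => hz h.symm), if_pos (fun h => hz h)]
  omega

lemma qube_adj_init {c : Bool} {u v : Fin (n+1) → Bool}
    (h : (Qube (n+1)).Adj u v) (hu : u (Fin.last n) = c) (hv : v (Fin.last n) = c) :
    (Qube n).Adj (Fin.init u) (Fin.init v) := by
  obtain ⟨hne, h1⟩ := qube_adj.mp h
  rw [hd_split u v, hu, hv, if_neg (by simp)] at h1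
  refine qube_adj.mpr ⟨fun he => ?_, by omega⟩
  rw [he, hammingDist_self] at h1
  omega

lemma pullback (c : Bool) {x y : Fin (n+1) → Bool} (p : (Qube (n+1)).Walk x y)
    (hc : ∀ z ∈ p.support, z (Fin.last n) = c) :
    ∃ q : (Qube n).Walk (Fin.init x) (Fin.init y), q.length = p.length ∧
      ∀ z ∈ q.support, (Fin.snoc z c : Fin (n+1) → Bool) ∈ p.support := by
  induction p with
  | nil =>
    rename_i u
    refine ⟨.nil, rfl, ?_⟩
    intro z hz
    simp only [SimpleGraph.Walk.support_nil, List.mem_singleton] at hz ⊢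
    subst hz
    rw [← hc u (by simp), Fin.snoc_init_self]
  | @cons u v w h p ih =>
    have hu := hc u (by simp)
    have hv := hc v (by simp)
    obtain ⟨q, hl, hs⟩ := ih (fun z hz => hc z (by simp [hz]))
    refine ⟨.cons (qube_adj_init h hu hv) q, by simp [hl], ?_⟩
    intro z hz
    rw [SimpleGraph.Walk.support_cons] at hz ⊢
    rcases List.mem_cons.mp hz with h1 | h1
    · subst h1
      rw [← hu, Fin.snoc_init_self]
      exact List.mem_cons_self
    · exact List.mem_cons_of_mem _ (hs z h1)

lemma support_last {a b : Fin n → Bool} {c : Bool}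
    (p : (Qube (n+1)).Walk (Fin.snoc a c) (Fin.snoc b c))
    (hp : p.length = hammingDist a b) : ∀ z ∈ p.support, z (Fin.last n) = c := by
  intro z hz
  by_contra hne
  have h1 := hd_le_length (p.takeUntil z hz)
  have h2 := hd_le_length (p.dropUntil z hz)
  have h3 : (p.takeUntil z hz).length + (p.dropUntil z hz).length = p.length := by
    rw [← SimpleGraph.Walk.length_append, SimpleGraph.Walk.take_spec]
  have h4 := hd_detour (a := a) (b := b) (c := c) hne
  omega

lemma layer_mutualVis {X : Set (Fin (n+1) → Bool)} (hX : MutualVisSet (Qube (n+1)) X)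
    (c : Bool) :
    MutualVisSet (Qube n) {a : Fin n → Bool | (Fin.snoc a c : Fin (n+1) → Bool) ∈ X} := by
  intro a ha b hb
  obtain ⟨p, hpath, hlen, hvis⟩ := hX _ ha _ hb
  rw [qube_dist, hd_snoc] at hlen
  have hsupp := support_last p hlen
  obtain ⟨q0, hql0, hqs0⟩ := pullback c p hsupp
  set q : (Qube n).Walk a b := q0.copy (by simp) (by simp) with hq
  have hql : q.length = p.length := by rw [hq, SimpleGraph.Walk.length_copy]; exact hql0
  have hqs : ∀ z ∈ q.support, (Fin.snoc z c : Fin (n+1) → Bool) ∈ p.support := by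
    intro z hz
    exact hqs0 z (by rwa [hq, SimpleGraph.Walk.support_copy] at hz)
  refine ⟨q.bypass, q.bypass_isPath, ?_, ?_⟩
  · refine le_antisymm ?_ (SimpleGraph.dist_le _)
    calc q.bypass.length ≤ q.length := SimpleGraph.Walk.length_bypass_le q
    _ = (Qube n).dist a b := by rw [hql, hlen, qube_dist]
  · intro z hz hzX
    have hz' := hqs z (SimpleGraph.Walk.support_bypass_subset q hz)
    rcases hvis _ hz' hzX with h | h
    · left
      have := congrArg Fin.init h
      rwa [Fin.init_snoc, Fin.init_snoc] at this
    · right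
      have := congrArg Fin.init h
      rwa [Fin.init_snoc, Fin.init_snoc] at this

end

lemma bdd_mvn {V : Type*} [Fintype V] (G : SimpleGraph V) :
    BddAbove {m | ∃ X : Set V, MutualVisSet G X ∧ X.ncard = m} := by
  refine ⟨Fintype.card V, ?_⟩
  rintro m ⟨X, -, rfl⟩
  have := Set.ncard_le_ncard (Set.subset_univ X) Set.finite_univ
  simpa [Set.ncard_univ, Nat.card_eq_fintype_card] using this

lemma snoc_inj {n : ℕ} (c : Bool) :
    Function.Injective (fun a => (Fin.snoc a c : Fin (n+1) → Bool)) := by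
  intro a b h
  have := congrArg Fin.init h
  simpa using this

/-- `μ(Q_d) ≤ 2 μ(Q_{d-1})` for every `d ≥ 2`. -/
theorem mu_Qube_le_two_mul (d : ℕ) (hd : 2 ≤ d) :
    mutualVisNum (Qube d) ≤ 2 * mutualVisNum (Qube (d - 1)) := by
  obtain ⟨n, rfl⟩ : ∃ n, d = n + 1 := ⟨d - 1, by omega⟩
  show mutualVisNum (Qube (n+1)) ≤ 2 * mutualVisNum (Qube n)
  rw [mutualVisNum]
  apply csSup_le
  · exact ⟨0, ∅, fun x hx => absurd hx (Set.notMem_empty x), by simp⟩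
  rintro m ⟨X, hX, rfl⟩
  have hsub : X ⊆ (fun a => (Fin.snoc a false : Fin (n+1) → Bool)) ''
      {a | (Fin.snoc a false : Fin (n+1) → Bool) ∈ X} ∪
      (fun a => (Fin.snoc a true : Fin (n+1) → Bool)) ''
      {a | (Fin.snoc a true : Fin (n+1) → Bool) ∈ X} := by
    intro x hx
    rcases Bool.eq_false_or_eq_true (x (Fin.last n)) with hc | hc
    · right
      exact ⟨Fin.init x, by rw [Set.mem_setOf_eq, ← hc, Fin.snoc_init_self]; exact hx,
        by rw [← hc]; exact Fin.snoc_init_self x⟩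
    · left
      exact ⟨Fin.init x, by rw [Set.mem_setOf_eq, ← hc, Fin.snoc_init_self]; exact hx,
        by rw [← hc]; exact Fin.snoc_init_self x⟩
  have key : ∀ c : Bool, ({a | (Fin.snoc a c : Fin (n+1) → Bool) ∈ X}).ncard ≤
      mutualVisNum (Qube n) := by
    intro c
    exact le_csSup (bdd_mvn (Qube n)) ⟨_, layer_mutualVis hX c, rfl⟩
  calc X.ncard ≤ _ := Set.ncard_le_ncard hsub (Set.toFinite _)
  _ ≤ _ + _ := Set.ncard_union_le _ _
  _ ≤ mutualVisNum (Qube n) + mutualVisNum (Qube n) := by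
      rw [Set.ncard_image_of_injective _ (snoc_inj false),
        Set.ncard_image_of_injective _ (snoc_inj true)]
      exact Nat.add_le_add (key false) (key true)
  _ = 2 * mutualVisNum (Qube n) := by ring
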